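/- Let β > 0 and μ > 0, and let u : (0,∞) → ℂ be locally W^{1,2} with ∫_0^∞ |u'(ξ)|^2 ξ^β e^{-μξ} dξ < ∞ and ∫_0^∞ |u(ξ)|^2 ξ^{β-1} e^{-μξ} dξ < ∞. Then lim_{ξ→0+} ξ^β |u(ξ)|^2 = 0 and lim_{ξ→∞} ξ^β e^{-μξ} |u(ξ)|^2 = 0. -/

import Mathlib

open MeasureTheory Set Filter

namespace VanishingTraceAux

noncomputable def hfun (β μ : ℝ) (u : ℝ → ℂ) : ℝ → ℝ :=
  fun ξ => ξ ^ β * Real.exp (-μ * ξ) * Complex.normSq (u ξ)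

noncomputable def hD (β μ : ℝ) (u u' : ℝ → ℂ) : ℝ → ℝ :=
  fun ξ => (β * ξ ^ (β - 1) - μ * ξ ^ β) * Real.exp (-μ * ξ) * Complex.normSq (u ξ)
    + ξ ^ β * Real.exp (-μ * ξ) *
      (2 * ((u ξ).re * (u' ξ).re + (u ξ).im * (u' ξ).im))

noncomputable def Phi (β μ : ℝ) (u u' : ℝ → ℂ) : ℝ → ℝ :=
  fun ξ => (β + μ + 1) * (‖u ξ‖ ^ 2 * ξ ^ (β - 1) * Real.exp (-μ * ξ))
    + (1 + 1 / μ) * (‖u' ξ‖ ^ 2 * ξ ^ β * Real.exp (-μ * ξ))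

theorem abs_sq_eq (z : ℂ) : ‖z‖ ^ 2 = z.re ^ 2 + z.im ^ 2 := by
  rw [Complex.sq_norm, Complex.normSq_apply]; ring

theorem hfun_nonneg (β μ : ℝ) (u : ℝ → ℂ) (ξ : ℝ) (hξ : 0 < ξ) : 0 ≤ hfun β μ u ξ :=
  mul_nonneg (mul_nonneg (Real.rpow_pos_of_pos hξ _).le (Real.exp_pos _).le)
    (Complex.normSq_nonneg _)

theorem hasDerivAt_hfun (β μ : ℝ) (u u' : ℝ → ℂ) (ξ : ℝ) (hξ : 0 < ξ)
    (hd : HasDerivAt u (u' ξ) ξ) :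
    HasDerivAt (hfun β μ u) (hD β μ u u' ξ) ξ := by
  have hre : HasDerivAt (fun t => (u t).re) ((u' ξ).re) ξ :=
    (Complex.reCLM.hasFDerivAt.comp_hasDerivAt ξ hd)
  have him : HasDerivAt (fun t => (u t).im) ((u' ξ).im) ξ :=
    (Complex.imCLM.hasFDerivAt.comp_hasDerivAt ξ hd)
  have hq : HasDerivAt (fun t => Complex.normSq (u t))
      (2 * ((u ξ).re * (u' ξ).re + (u ξ).im * (u' ξ).im)) ξ := by
    have := (hre.mul hre).add (him.mul him)
    simp only [Complex.normSq_apply]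
    refine HasDerivAt.congr_deriv this ?_
    ring
  have hp : HasDerivAt (fun t : ℝ => t ^ β) (β * ξ ^ (β - 1)) ξ :=
    Real.hasDerivAt_rpow_const (Or.inl hξ.ne')
  have he : HasDerivAt (fun t : ℝ => Real.exp (-μ * t)) (-μ * Real.exp (-μ * ξ)) ξ := by
    have := ((hasDerivAt_id ξ).const_mul (-μ)).exp
    simp only [id] at this
    convert this using 1
    ring
  have := (hp.mul he).mul hq
  refine HasDerivAt.congr_deriv this ?_
  simp only [hD, Pi.mul_apply]
  ring

theorem key_ineq_upper (β μ x y a b p p1 e : ℝ) (hμ : 0 < μ)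
    (hp : 0 < p) (hp1 : 0 < p1) (he : 0 < e) :
    (β * p1 - μ * p) * e * (x * x + y * y) + p * e * (2 * (x * a + y * b)) ≤
      (β + μ + 1) * ((x ^ 2 + y ^ 2) * p1 * e) + (1 + 1 / μ) * ((a ^ 2 + b ^ 2) * p * e) := by
  have hc : μ * (1 / μ) = 1 := mul_one_div_cancel hμ.ne'
  have hkey : 2 * (x * a + y * b) ≤ μ * (x * x + y * y) + (1 / μ) * (a ^ 2 + b ^ 2) := by
    have h2 : 2 * (x * a + y * b) * μ ≤ (μ * (x * x + y * y) + (1 / μ) * (a ^ 2 + b ^ 2)) * μ := by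
      have h3 : μ * ((1 / μ) * (a ^ 2 + b ^ 2)) = a ^ 2 + b ^ 2 := by
        rw [← mul_assoc, hc, one_mul]
      nlinarith [sq_nonneg (μ * x - a), sq_nonneg (μ * y - b)]
    exact le_of_mul_le_mul_right h2 hμ
  have step1 : p * e * (2 * (x * a + y * b)) ≤
      p * e * (μ * (x * x + y * y) + (1 / μ) * (a ^ 2 + b ^ 2)) :=
    mul_le_mul_of_nonneg_left hkey (mul_nonneg hp.le he.le)
  have hq0 : (0:ℝ) ≤ x * x + y * y := add_nonneg (mul_self_nonneg x) (mul_self_nonneg y)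
  have hs0 : (0:ℝ) ≤ a ^ 2 + b ^ 2 := by positivity
  nlinarith [mul_nonneg (mul_nonneg hp1.le he.le) hq0, mul_nonneg (mul_nonneg hp.le he.le) hs0,
    mul_nonneg (mul_nonneg (mul_nonneg hμ.le hp1.le) he.le) hq0]

theorem key_ineq_lower (β μ x y a b p p1 e : ℝ) (hβ : 0 < β) (hμ : 0 < μ)
    (hp : 0 < p) (hp1 : 0 < p1) (hpp1 : p ≤ p1) (he : 0 < e) :
    -((β + μ + 1) * ((x ^ 2 + y ^ 2) * p1 * e) + (1 + 1 / μ) * ((a ^ 2 + b ^ 2) * p * e)) ≤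
      (β * p1 - μ * p) * e * (x * x + y * y) + p * e * (2 * (x * a + y * b)) := by
  have hkey : -((x * x + y * y) + (a ^ 2 + b ^ 2)) ≤ 2 * (x * a + y * b) := by
    nlinarith [sq_nonneg (x + a), sq_nonneg (y + b)]
  have step1 : p * e * (-((x * x + y * y) + (a ^ 2 + b ^ 2))) ≤ p * e * (2 * (x * a + y * b)) :=
    mul_le_mul_of_nonneg_left hkey (mul_nonneg hp.le he.le)
  have hq0 : (0:ℝ) ≤ x * x + y * y := add_nonneg (mul_self_nonneg x) (mul_self_nonneg y)
  have hs0 : (0:ℝ) ≤ a ^ 2 + b ^ 2 := by positivity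
  have hμ' : 0 < 1 / μ := by positivity
  nlinarith [mul_nonneg (mul_nonneg hβ.le hp1.le) (mul_nonneg he.le hq0),
    mul_nonneg (mul_nonneg hμ.le (sub_nonneg.mpr hpp1)) (mul_nonneg he.le hq0),
    mul_nonneg (mul_nonneg he.le hq0) (sub_nonneg.mpr hpp1),
    mul_nonneg (mul_nonneg hμ'.le hs0) (mul_nonneg hp.le he.le),
    mul_nonneg hs0 (mul_nonneg hp.le he.le)]

theorem Phi_nonneg (β μ : ℝ) (u u' : ℝ → ℂ) (hβ : 0 < β) (hμ : 0 < μ) (ξ : ℝ) (hξ : 0 < ξ) :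
    0 ≤ Phi β μ u u' ξ := by
  have h1 : (0:ℝ) < β + μ + 1 := by linarith
  have h2 : (0:ℝ) < 1 + 1 / μ := by positivity
  have e1 : (0:ℝ) < ξ ^ (β - 1) := Real.rpow_pos_of_pos hξ _
  have e2 : (0:ℝ) < ξ ^ β := Real.rpow_pos_of_pos hξ _
  have e3 : (0:ℝ) < Real.exp (-μ * ξ) := Real.exp_pos _
  have := sq_nonneg (‖u ξ‖)
  have := sq_nonneg (‖u' ξ‖)
  unfold Phi
  positivity

theorem hD_le_Phi (β μ : ℝ) (u u' : ℝ → ℂ) (hβ : 0 < β) (hμ : 0 < μ) (ξ : ℝ) (hξ : 0 < ξ) :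
    hD β μ u u' ξ ≤ Phi β μ u u' ξ := by
  have h := key_ineq_upper β μ (u ξ).re (u ξ).im (u' ξ).re (u' ξ).im (ξ ^ β) (ξ ^ (β - 1))
    (Real.exp (-μ * ξ)) hμ (Real.rpow_pos_of_pos hξ _) (Real.rpow_pos_of_pos hξ _)
    (Real.exp_pos _)
  unfold hD Phi
  rw [abs_sq_eq, abs_sq_eq, Complex.normSq_apply]
  linarith

theorem neg_Phi_le_hD (β μ : ℝ) (u u' : ℝ → ℂ) (hβ : 0 < β) (hμ : 0 < μ) (ξ : ℝ)
    (hξ : 0 < ξ) (hξ1 : ξ ≤ 1) :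
    -Phi β μ u u' ξ ≤ hD β μ u u' ξ := by
  have hpp1 : ξ ^ β ≤ ξ ^ (β - 1) :=
    Real.rpow_le_rpow_of_exponent_ge hξ hξ1 (by linarith)
  have h := key_ineq_lower β μ (u ξ).re (u ξ).im (u' ξ).re (u' ξ).im (ξ ^ β) (ξ ^ (β - 1))
    (Real.exp (-μ * ξ)) hβ hμ (Real.rpow_pos_of_pos hξ _) (Real.rpow_pos_of_pos hξ _) hpp1
    (Real.exp_pos _)
  unfold hD Phi
  rw [abs_sq_eq, abs_sq_eq, Complex.normSq_apply]
  linarith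

theorem hD_abs_le (β μ : ℝ) (u u' : ℝ → ℂ) (ξ : ℝ) (hξ : 0 < ξ) :
    |hD β μ u u' ξ| ≤
      (|β * ξ ^ (β - 1) - μ * ξ ^ β| + ξ ^ β) * Real.exp (-μ * ξ) * Complex.normSq (u ξ)
        + ‖u' ξ‖ ^ 2 * ξ ^ β * Real.exp (-μ * ξ) := by
  set x := (u ξ).re; set y := (u ξ).im; set a := (u' ξ).re; set b := (u' ξ).im
  have hq0 : (0:ℝ) ≤ Complex.normSq (u ξ) := Complex.normSq_nonneg _
  have hp : (0:ℝ) < ξ ^ β := Real.rpow_pos_of_pos hξ _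
  have he : (0:ℝ) < Real.exp (-μ * ξ) := Real.exp_pos _
  have hT : |2 * (x * a + y * b)| ≤ Complex.normSq (u ξ) + ‖u' ξ‖ ^ 2 := by
    rw [Complex.sq_norm, Complex.normSq_apply, Complex.normSq_apply]
    rw [abs_le]
    constructor
    · nlinarith [sq_nonneg (x + a), sq_nonneg (y + b)]
    · nlinarith [sq_nonneg (x - a), sq_nonneg (y - b)]
  calc |hD β μ u u' ξ| ≤
      |(β * ξ ^ (β - 1) - μ * ξ ^ β) * Real.exp (-μ * ξ) * Complex.normSq (u ξ)|
        + |ξ ^ β * Real.exp (-μ * ξ) * (2 * (x * a + y * b))| := abs_add_le _ _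
    _ = |β * ξ ^ (β - 1) - μ * ξ ^ β| * Real.exp (-μ * ξ) * Complex.normSq (u ξ)
        + ξ ^ β * Real.exp (-μ * ξ) * |2 * (x * a + y * b)| := by
        rw [abs_mul, abs_mul, abs_mul, abs_mul, abs_of_pos he, abs_of_nonneg hq0,
          abs_of_pos hp]
    _ ≤ |β * ξ ^ (β - 1) - μ * ξ ^ β| * Real.exp (-μ * ξ) * Complex.normSq (u ξ)
        + ξ ^ β * Real.exp (-μ * ξ) * (Complex.normSq (u ξ) + ‖u' ξ‖ ^ 2) := by
        have := mul_le_mul_of_nonneg_left hT (mul_nonneg hp.le he.le)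
        linarith [this]
    _ = _ := by ring

theorem hD_integrableOn (β μ : ℝ) (u u' : ℝ → ℂ)
    (hderiv : ∀ ξ ∈ Ioi (0 : ℝ), HasDerivAt u (u' ξ) ξ)
    (hint' : IntegrableOn
      (fun ξ => ‖u' ξ‖ ^ 2 * ξ ^ β * Real.exp (-μ * ξ)) (Ioi 0))
    (a b : ℝ) (ha : 0 < a) :
    IntegrableOn (hD β μ u u') (Ioc a b) := by
  have hsub : Ioc a b ⊆ Ioi (0:ℝ) := fun x hx => ha.trans hx.1
  have hIcc : Icc a b ⊆ Ioi (0:ℝ) := fun x hx => lt_of_lt_of_le ha hx.1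
  have hucont : ContinuousOn u (Ioi 0) :=
    fun ξ hξ => ((hderiv ξ hξ).continuousAt).continuousWithinAt
  set v := deriv u with hv
  have hveq : ∀ ξ ∈ Ioi (0:ℝ), u' ξ = v ξ := fun ξ hξ => ((hderiv ξ hξ).deriv).symm
  have heq : EqOn (hD β μ u u') (hD β μ u v) (Ioc a b) := by
    intro ξ hξ
    simp only [hD, hveq ξ (hsub hξ)]
  rw [integrableOn_congr_fun heq measurableSet_Ioc]
  have hrp1 : ContinuousOn (fun ξ : ℝ => ξ ^ (β - 1)) (Ioi 0) := fun ξ hξ =>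
    (Real.continuousAt_rpow_const ξ (β - 1) (Or.inl (ne_of_gt hξ))).continuousWithinAt
  have hrp2 : ContinuousOn (fun ξ : ℝ => ξ ^ β) (Ioi 0) := fun ξ hξ =>
    (Real.continuousAt_rpow_const ξ β (Or.inl (ne_of_gt hξ))).continuousWithinAt
  have hexp : Continuous (fun ξ : ℝ => Real.exp (-μ * ξ)) :=
    Real.continuous_exp.comp (continuous_const.mul continuous_id)
  have hnsq : ContinuousOn (fun ξ => Complex.normSq (u ξ)) (Ioi 0) :=
    Complex.continuous_normSq.comp_continuousOn hucont
  set W : ℝ → ℝ := fun ξ =>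
    (|β * ξ ^ (β - 1) - μ * ξ ^ β| + ξ ^ β) * Real.exp (-μ * ξ) * Complex.normSq (u ξ)
      + ‖v ξ‖ ^ 2 * ξ ^ β * Real.exp (-μ * ξ) with hW
  have hWint : IntegrableOn W (Ioc a b) := by
    apply Integrable.add
    · have hcont : ContinuousOn (fun ξ : ℝ =>
        (|β * ξ ^ (β - 1) - μ * ξ ^ β| + ξ ^ β) * Real.exp (-μ * ξ) * Complex.normSq (u ξ))
          (Ioi 0) := by
        exact (((((continuousOn_const.mul hrp1).sub (continuousOn_const.mul hrp2)).abs.add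
          hrp2).mul hexp.continuousOn).mul hnsq)
      exact ((hcont.mono hIcc).integrableOn_Icc).mono_set Ioc_subset_Icc_self
    · have h1 : IntegrableOn
          (fun ξ => ‖u' ξ‖ ^ 2 * ξ ^ β * Real.exp (-μ * ξ)) (Ioc a b) :=
        hint'.mono_set hsub
      apply (integrableOn_congr_fun (fun ξ hξ => ?_) measurableSet_Ioc).mp h1
      simp only [hveq ξ (hsub hξ)]
  have hum : AEStronglyMeasurable u (volume.restrict (Ioc a b)) :=
    (hucont.mono hsub).aestronglyMeasurable measurableSet_Ioc
  have hvm : AEStronglyMeasurable v (volume.restrict (Ioc a b)) :=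
    (measurable_deriv u).aestronglyMeasurable
  have hrp1m : AEStronglyMeasurable (fun ξ : ℝ => ξ ^ (β - 1)) (volume.restrict (Ioc a b)) :=
    (hrp1.mono hsub).aestronglyMeasurable measurableSet_Ioc
  have hrp2m : AEStronglyMeasurable (fun ξ : ℝ => ξ ^ β) (volume.restrict (Ioc a b)) :=
    (hrp2.mono hsub).aestronglyMeasurable measurableSet_Ioc
  have hexpm : AEStronglyMeasurable (fun ξ : ℝ => Real.exp (-μ * ξ))
      (volume.restrict (Ioc a b)) := hexp.aestronglyMeasurable
  have hmeas : AEStronglyMeasurable (hD β μ u v) (volume.restrict (Ioc a b)) := by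
    apply AEStronglyMeasurable.add
    · exact (((hrp1m.const_mul β).sub (hrp2m.const_mul μ)).mul hexpm).mul
        (Complex.continuous_normSq.comp_aestronglyMeasurable hum)
    · exact ((hrp2m.mul hexpm).mul
        ((((Complex.continuous_re.comp_aestronglyMeasurable hum).mul
          (Complex.continuous_re.comp_aestronglyMeasurable hvm)).add
          ((Complex.continuous_im.comp_aestronglyMeasurable hum).mul
          (Complex.continuous_im.comp_aestronglyMeasurable hvm))).const_mul 2))
  apply Integrable.mono' hWint hmeas
  refine (ae_restrict_iff' measurableSet_Ioc).mpr (ae_of_all _ fun ξ hξ => ?_)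
  simpa [Real.norm_eq_abs, hW] using hD_abs_le β μ u v ξ (hsub hξ)

theorem exists_lt_atTop (h : ℝ → ℝ)
    (hint : IntegrableOn (fun ξ => h ξ * ξ⁻¹) (Ioi 0))
    (ε M : ℝ) (hε : 0 < ε) : ∃ ξ, max M 1 ≤ ξ ∧ h ξ < ε := by
  by_contra hcon
  push_neg at hcon
  set M' := max M 1 with hM'def
  have hM' : (0:ℝ) < M' := lt_of_lt_of_le one_pos (le_max_right _ _)
  have h1 : IntegrableOn (fun ξ => h ξ * ξ⁻¹) (Ioi M') :=
    hint.mono_set (Ioi_subset_Ioi hM'.le)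
  have h2 : IntegrableOn (fun ξ : ℝ => ε * ξ⁻¹) (Ioi M') := by
    apply Integrable.mono' h1 ((measurable_const.mul measurable_inv).aestronglyMeasurable)
    refine (ae_restrict_iff' measurableSet_Ioi).mpr (ae_of_all _ fun ξ hξ => ?_)
    have hξ0 : (0:ℝ) < ξ := hM'.trans hξ
    have hεh : ε ≤ h ξ := hcon ξ (le_of_lt hξ)
    show ‖ε * ξ⁻¹‖ ≤ _
    rw [Real.norm_eq_abs, abs_of_nonneg (mul_nonneg hε.le (inv_nonneg.mpr hξ0.le))]
    exact mul_le_mul_of_nonneg_right hεh (inv_nonneg.mpr hξ0.le)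
  have h3 : IntegrableOn (fun ξ : ℝ => ξ⁻¹) (Ioi M') := by
    have h4 := h2.const_mul ε⁻¹
    refine (integrableOn_congr_fun (fun ξ _ => ?_) measurableSet_Ioi).mpr h4
    field_simp
  have h5 : IntegrableOn (fun ξ : ℝ => ξ ^ (-1:ℝ)) (Ioi M') := by
    refine (integrableOn_congr_fun (fun ξ _ => ?_) measurableSet_Ioi).mpr h3
    exact Real.rpow_neg_one ξ
  rw [integrableOn_Ioi_rpow_iff hM'] at h5
  linarith

theorem exists_lt_atZero (h : ℝ → ℝ)
    (hint : IntegrableOn (fun ξ => h ξ * ξ⁻¹) (Ioi 0))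
    (ε δ : ℝ) (hε : 0 < ε) (hδ : 0 < δ) : ∃ ξ, 0 < ξ ∧ ξ ≤ min δ 1 ∧ h ξ < ε := by
  by_contra hcon
  push_neg at hcon
  set δ' := min δ 1 with hδ'def
  have hδ' : (0:ℝ) < δ' := lt_min hδ one_pos
  have h1 : IntegrableOn (fun ξ => h ξ * ξ⁻¹) (Ioo 0 δ') :=
    hint.mono_set Ioo_subset_Ioi_self
  have h2 : IntegrableOn (fun ξ : ℝ => ε * ξ⁻¹) (Ioo 0 δ') := by
    apply Integrable.mono' h1 ((measurable_const.mul measurable_inv).aestronglyMeasurable)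
    refine (ae_restrict_iff' measurableSet_Ioo).mpr (ae_of_all _ fun ξ hξ => ?_)
    have hξ0 : (0:ℝ) < ξ := hξ.1
    have hεh : ε ≤ h ξ := hcon ξ hξ0 hξ.2.le
    show ‖ε * ξ⁻¹‖ ≤ _
    rw [Real.norm_eq_abs, abs_of_nonneg (mul_nonneg hε.le (inv_nonneg.mpr hξ0.le))]
    exact mul_le_mul_of_nonneg_right hεh (inv_nonneg.mpr hξ0.le)
  have h3 : IntegrableOn (fun ξ : ℝ => ξ⁻¹) (Ioo 0 δ') := by
    have h4 := h2.const_mul ε⁻¹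
    refine (integrableOn_congr_fun (fun ξ _ => ?_) measurableSet_Ioo).mpr h4
    field_simp
  have h5 : IntegrableOn (fun ξ : ℝ => ξ ^ (-1:ℝ)) (Ioo 0 δ') := by
    refine (integrableOn_congr_fun (fun ξ _ => ?_) measurableSet_Ioo).mpr h3
    exact Real.rpow_neg_one ξ
  rw [intervalIntegral.integrableOn_Ioo_rpow_iff hδ'] at h5
  linarith

theorem integral_split (Φ : ℝ → ℝ) (hΦ : IntegrableOn Φ (Ioi 0)) (c : ℝ) (hc : 0 < c) :
    ∫ ξ in Ioi (0:ℝ), Φ ξ = (∫ ξ in Ioc 0 c, Φ ξ) + ∫ ξ in Ioi c, Φ ξ := by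
  rw [← setIntegral_union (Ioc_disjoint_Ioi le_rfl) measurableSet_Ioi
    (hΦ.mono_set Ioc_subset_Ioi_self) (hΦ.mono_set (Ioi_subset_Ioi hc.le)),
    Ioc_union_Ioi_eq_Ioi hc.le]

theorem tail_small (Φ : ℝ → ℝ) (hΦ : IntegrableOn Φ (Ioi 0)) (ε : ℝ) (hε : 0 < ε) :
    ∃ a₀ : ℝ, 1 ≤ a₀ ∧ ∫ ξ in Ioi a₀, Φ ξ < ε := by
  have hU : (⋃ n : ℕ, Ioc (0:ℝ) ((n:ℝ) + 1)) = Ioi 0 := by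
    ext x
    simp only [mem_iUnion, mem_Ioc, mem_Ioi]
    constructor
    · rintro ⟨n, h1, _⟩; exact h1
    · intro hx
      obtain ⟨n, hn⟩ := exists_nat_ge x
      exact ⟨n, hx, by linarith⟩
  have hmono : Monotone (fun n : ℕ => Ioc (0:ℝ) ((n:ℝ) + 1)) := by
    intro m n hmn
    exact Ioc_subset_Ioc_right (by linarith [(Nat.cast_le (α := ℝ)).mpr hmn])
  have hfi : IntegrableOn Φ (⋃ n : ℕ, Ioc (0:ℝ) ((n:ℝ) + 1)) := by rw [hU]; exact hΦ
  have ht := tendsto_setIntegral_of_monotone (fun n : ℕ => measurableSet_Ioc) hmono hfi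
  rw [hU] at ht
  have hev : ∀ᶠ n : ℕ in atTop,
      (∫ ξ in Ioi (0:ℝ), Φ ξ) - ε < ∫ ξ in Ioc (0:ℝ) ((n:ℝ) + 1), Φ ξ :=
    ht.eventually (eventually_gt_nhds (sub_lt_self _ hε))
  obtain ⟨n, hn⟩ := hev.exists
  refine ⟨(n:ℝ) + 1, by have := Nat.cast_nonneg (α := ℝ) n; linarith, ?_⟩
  have hsplit := integral_split Φ hΦ ((n:ℝ) + 1) (by positivity)
  linarith

theorem head_small (Φ : ℝ → ℝ) (hΦ : IntegrableOn Φ (Ioi 0))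
    (hnn : ∀ ξ ∈ Ioi (0:ℝ), 0 ≤ Φ ξ) (ε : ℝ) (hε : 0 < ε) :
    ∃ δ₀ : ℝ, 0 < δ₀ ∧ δ₀ ≤ 1 ∧ ∫ ξ in Ioc (0:ℝ) δ₀, Φ ξ < ε := by
  have hU : (⋃ n : ℕ, Ioi (((n:ℝ) + 1)⁻¹)) = Ioi 0 := by
    ext x
    simp only [mem_iUnion, mem_Ioi]
    constructor
    · rintro ⟨n, h1⟩
      exact lt_trans (by positivity) h1
    · intro hx
      obtain ⟨n, hn⟩ := exists_nat_gt x⁻¹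
      have h1 : x⁻¹ < (n:ℝ) + 1 := by linarith
      exact ⟨n, inv_lt_of_inv_lt₀ hx h1⟩
  have hmono : Monotone (fun n : ℕ => Ioi (((n:ℝ) + 1)⁻¹)) := by
    intro m n hmn
    apply Ioi_subset_Ioi
    exact inv_anti₀ (by positivity) (by linarith [(Nat.cast_le (α := ℝ)).mpr hmn])
  have hfi : IntegrableOn Φ (⋃ n : ℕ, Ioi (((n:ℝ) + 1)⁻¹)) := by
    rw [hU]; exact hΦ
  have ht := tendsto_setIntegral_of_monotone (fun n : ℕ => measurableSet_Ioi) hmono hfi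
  rw [hU] at ht
  have hev : ∀ᶠ n : ℕ in atTop,
      (∫ ξ in Ioi (0:ℝ), Φ ξ) - ε < ∫ ξ in Ioi (((n:ℝ) + 1)⁻¹), Φ ξ :=
    ht.eventually (eventually_gt_nhds (sub_lt_self _ hε))
  obtain ⟨n, hn⟩ := hev.exists
  have hpos : (0:ℝ) < ((n:ℝ) + 1)⁻¹ := by positivity
  refine ⟨min (((n:ℝ) + 1)⁻¹) 1, lt_min hpos one_pos, min_le_right _ _, ?_⟩
  have hsplit := integral_split Φ hΦ (((n:ℝ) + 1)⁻¹) hpos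
  have hmono2 : (∫ ξ in Ioc (0:ℝ) (min (((n:ℝ) + 1)⁻¹) 1), Φ ξ) ≤
      ∫ ξ in Ioc (0:ℝ) (((n:ℝ) + 1)⁻¹), Φ ξ := by
    refine setIntegral_mono_set (hΦ.mono_set Ioc_subset_Ioi_self)
      ((ae_restrict_iff' measurableSet_Ioc).mpr (ae_of_all _ fun ξ hξ => hnn ξ hξ.1))
      (HasSubset.Subset.eventuallyLE (Ioc_subset_Ioc_right (min_le_left _ _)))
  linarith

end VanishingTraceAux

open VanishingTraceAux in
theorem vanishing_trace (β μ : ℝ) (hβ : 0 < β) (hμ : 0 < μ)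
    (u u' : ℝ → ℂ)
    (hderiv : ∀ ξ ∈ Ioi (0 : ℝ), HasDerivAt u (u' ξ) ξ)
    (hint' : IntegrableOn
      (fun ξ => ‖u' ξ‖ ^ 2 * ξ ^ β * Real.exp (-μ * ξ)) (Ioi 0))
    (hint : IntegrableOn
      (fun ξ => ‖u ξ‖ ^ 2 * ξ ^ (β - 1) * Real.exp (-μ * ξ)) (Ioi 0)) :
    Tendsto (fun ξ => ξ ^ β * ‖u ξ‖ ^ 2)
        (nhdsWithin 0 (Ioi 0)) (nhds 0) ∧
      Tendsto (fun ξ => ξ ^ β * Real.exp (-μ * ξ) * ‖u ξ‖ ^ 2)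
        atTop (nhds 0) := by
  have habs : ∀ ξ, ‖u ξ‖ ^ 2 = Complex.normSq (u ξ) := fun ξ => Complex.sq_norm _
  set h := hfun β μ u with hhdef
  set Φ := Phi β μ u u' with hΦdef
  have hΦint : IntegrableOn Φ (Ioi 0) := (hint.const_mul _).add (hint'.const_mul _)
  have hΦnn : ∀ ξ ∈ Ioi (0:ℝ), 0 ≤ Φ ξ := fun ξ hξ => Phi_nonneg β μ u u' hβ hμ ξ hξ
  -- FTC-based inequalities
  have key1 : ∀ a b : ℝ, 0 < a → a ≤ b → h b ≤ h a + ∫ ξ in Ioc a b, Φ ξ := by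
    intro a b ha hab
    have hID : IntegrableOn (hD β μ u u') (Ioc a b) :=
      hD_integrableOn β μ u u' hderiv hint' a b ha
    have hII : IntervalIntegrable (hD β μ u u') volume a b :=
      (intervalIntegrable_iff_integrableOn_Ioc_of_le hab).mpr hID
    have hIΦ : IntervalIntegrable Φ volume a b :=
      (intervalIntegrable_iff_integrableOn_Ioc_of_le hab).mpr
        (hΦint.mono_set (fun x hx => ha.trans hx.1))
    have hder : ∀ ξ ∈ uIcc a b, HasDerivAt h (hD β μ u u' ξ) ξ := by
      intro ξ hξ
      rw [uIcc_of_le hab] at hξ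
      have hξ0 : (0:ℝ) < ξ := lt_of_lt_of_le ha hξ.1
      exact hasDerivAt_hfun β μ u u' ξ hξ0 (hderiv ξ hξ0)
    have hftc := intervalIntegral.integral_eq_sub_of_hasDerivAt hder hII
    have hmono : (∫ ξ in a..b, hD β μ u u' ξ) ≤ ∫ ξ in a..b, Φ ξ :=
      intervalIntegral.integral_mono_on hab hII hIΦ
        (fun ξ hξ => hD_le_Phi β μ u u' hβ hμ ξ (lt_of_lt_of_le ha hξ.1))
    rw [hftc, intervalIntegral.integral_of_le hab] at hmono
    linarith
  have key2 : ∀ a b : ℝ, 0 < a → a ≤ b → b ≤ 1 → h a ≤ h b + ∫ ξ in Ioc a b, Φ ξ := by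
    intro a b ha hab hb1
    have hID : IntegrableOn (hD β μ u u') (Ioc a b) :=
      hD_integrableOn β μ u u' hderiv hint' a b ha
    have hII : IntervalIntegrable (hD β μ u u') volume a b :=
      (intervalIntegrable_iff_integrableOn_Ioc_of_le hab).mpr hID
    have hIΦ : IntervalIntegrable Φ volume a b :=
      (intervalIntegrable_iff_integrableOn_Ioc_of_le hab).mpr
        (hΦint.mono_set (fun x hx => ha.trans hx.1))
    have hder : ∀ ξ ∈ uIcc a b, HasDerivAt h (hD β μ u u' ξ) ξ := by
      intro ξ hξ
      rw [uIcc_of_le hab] at hξ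
      have hξ0 : (0:ℝ) < ξ := lt_of_lt_of_le ha hξ.1
      exact hasDerivAt_hfun β μ u u' ξ hξ0 (hderiv ξ hξ0)
    have hftc := intervalIntegral.integral_eq_sub_of_hasDerivAt hder hII
    have hmono : (∫ ξ in a..b, (fun t => -Φ t) ξ) ≤ ∫ ξ in a..b, hD β μ u u' ξ :=
      intervalIntegral.integral_mono_on hab hIΦ.neg hII
        (fun ξ hξ => neg_Phi_le_hD β μ u u' hβ hμ ξ (lt_of_lt_of_le ha hξ.1)
          (le_trans hξ.2 hb1))
    rw [intervalIntegral.integral_neg] at hmono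
    rw [hftc, intervalIntegral.integral_of_le hab] at hmono
    linarith
  -- integrability of h ξ * ξ⁻¹
  have hAeq : IntegrableOn (fun ξ => h ξ * ξ⁻¹) (Ioi 0) := by
    refine (integrableOn_congr_fun (fun ξ hξ => ?_) measurableSet_Ioi).mp hint
    have hξ0 : (0:ℝ) < ξ := hξ
    show ‖u ξ‖ ^ 2 * ξ ^ (β - 1) * Real.exp (-μ * ξ) = h ξ * ξ⁻¹
    rw [habs, hhdef]
    simp only [hfun]
    rw [Real.rpow_sub_one hξ0.ne']
    field_simp
  -- limit at infinity
  have hT2 : Tendsto h atTop (nhds 0) := by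
    rw [Metric.tendsto_atTop]
    intro ε hε
    obtain ⟨a₀, ha₀1, ha₀⟩ := tail_small Φ hΦint (ε/2) (half_pos hε)
    obtain ⟨A0, hA0ge, hA0lt⟩ := exists_lt_atTop h hAeq (ε/2) a₀ (half_pos hε)
    have hA0pos : (0:ℝ) < A0 := lt_of_lt_of_le one_pos (le_trans (le_max_right _ _) hA0ge)
    refine ⟨A0, fun b hb => ?_⟩
    have hb0 : (0:ℝ) < b := lt_of_lt_of_le hA0pos hb
    have h1 : h b ≤ h A0 + ∫ ξ in Ioc A0 b, Φ ξ := key1 A0 b hA0pos hb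
    have hsub2 : Ioc A0 b ⊆ Ioi a₀ :=
      fun x hx => lt_of_le_of_lt (le_trans (le_max_left _ _) hA0ge) hx.1
    have ha₀0 : (0:ℝ) < a₀ := lt_of_lt_of_le one_pos ha₀1
    have h2 : (∫ ξ in Ioc A0 b, Φ ξ) ≤ ∫ ξ in Ioi a₀, Φ ξ := by
      refine setIntegral_mono_set (hΦint.mono_set (Ioi_subset_Ioi ha₀0.le))
        ((ae_restrict_iff' measurableSet_Ioi).mpr
          (ae_of_all _ fun ξ hξ => hΦnn ξ (ha₀0.trans hξ)))
        (HasSubset.Subset.eventuallyLE hsub2)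
    have hbnn : 0 ≤ h b := hfun_nonneg β μ u b hb0
    rw [Real.dist_eq, sub_zero, abs_of_nonneg hbnn]
    linarith
  have conc2 : Tendsto (fun ξ => ξ ^ β * Real.exp (-μ * ξ) * ‖u ξ‖ ^ 2)
      atTop (nhds 0) := by
    refine Tendsto.congr (fun ξ => ?_) hT2
    show h ξ = _
    rw [hhdef]; simp only [hfun]; rw [habs]
  -- limit at zero
  have hT0 : Tendsto h (nhdsWithin 0 (Ioi 0)) (nhds 0) := by
    rw [Metric.tendsto_nhdsWithin_nhds]
    intro ε hε
    obtain ⟨δ₀, hδ₀pos, hδ₀le1, hδ₀⟩ := head_small Φ hΦint hΦnn (ε/2) (half_pos hε)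
    obtain ⟨b, hbpos, hble, hblt⟩ := exists_lt_atZero h hAeq (ε/2) δ₀ (half_pos hε) hδ₀pos
    have hbδ₀ : b ≤ δ₀ := le_trans hble (min_le_left _ _)
    have hb1 : b ≤ 1 := le_trans hble (min_le_right _ _)
    refine ⟨b, hbpos, fun ξ hξ hdist => ?_⟩
    have hξpos : (0:ℝ) < ξ := hξ
    rw [Real.dist_eq, sub_zero, abs_of_pos hξpos] at hdist
    have h1 : h ξ ≤ h b + ∫ t in Ioc ξ b, Φ t := key2 ξ b hξpos hdist.le hb1
    have h2 : (∫ t in Ioc ξ b, Φ t) ≤ ∫ t in Ioc (0:ℝ) δ₀, Φ t := by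
      refine setIntegral_mono_set (hΦint.mono_set Ioc_subset_Ioi_self)
        ((ae_restrict_iff' measurableSet_Ioc).mpr
          (ae_of_all _ fun t ht => hΦnn t ht.1))
        (HasSubset.Subset.eventuallyLE ?_)
      exact Ioc_subset_Ioc hξpos.le hbδ₀
    have hξnn : 0 ≤ h ξ := hfun_nonneg β μ u ξ hξpos
    rw [Real.dist_eq, sub_zero, abs_of_nonneg hξnn]
    linarith
  have conc1 : Tendsto (fun ξ => ξ ^ β * ‖u ξ‖ ^ 2)
      (nhdsWithin 0 (Ioi 0)) (nhds 0) := by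
    have hexp : Tendsto (fun ξ : ℝ => Real.exp (μ * ξ)) (nhdsWithin 0 (Ioi 0)) (nhds 1) := by
      have hc : Continuous (fun ξ : ℝ => Real.exp (μ * ξ)) :=
        Real.continuous_exp.comp (continuous_const.mul continuous_id)
      have := (hc.tendsto 0).mono_left (nhdsWithin_le_nhds (s := Ioi 0))
      simpa using this
    have hmul := hT0.mul hexp
    rw [zero_mul] at hmul
    refine Tendsto.congr (fun ξ => ?_) hmul
    show h ξ * Real.exp (μ * ξ) = ξ ^ β * ‖u ξ‖ ^ 2
    have e1 : Real.exp (-μ * ξ) * Real.exp (μ * ξ) = 1 := by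
      rw [← Real.exp_add, neg_mul, neg_add_cancel, Real.exp_zero]
    rw [hhdef]
    simp only [hfun]
    calc ξ ^ β * Real.exp (-μ * ξ) * Complex.normSq (u ξ) * Real.exp (μ * ξ)
        = ξ ^ β * Complex.normSq (u ξ) * (Real.exp (-μ * ξ) * Real.exp (μ * ξ)) := by ring
      _ = ξ ^ β * ‖u ξ‖ ^ 2 := by rw [e1, habs]; ring
  exact ⟨conc1, conc2⟩
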